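/- Let p, ℓ be integers with 0 ≤ ℓ < p, and define Q₁(τ) = ((1−τ)/2)^p · P_ℓ^{(p,−p)}(τ) and Q₃(τ) = ((1+τ)/2)^p · P_ℓ^{(−p,p)}(τ). Then Q₁ and Q₃ are polynomial functions, each solves the Jacobi-type ODE with parameters (p, ℓ) on (−1,1), they are linearly independent, and every solution a : (−1,1) → ℝ of this ODE can be written as a(τ) = c·Q₁(τ) + d·Q₃(τ) for unique real constants c and d. -/

import Mathlib

/-- The generalized binomial coefficient `C(y, k) = (∏_{i=0}^{k−1}(y−i)) / k!`
for real `y` and natural `k`. -/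
noncomputable def genBinom (y : ℝ) (k : ℕ) : ℝ :=
  (∏ i ∈ Finset.range k, (y - (i : ℝ))) / (Nat.factorial k : ℝ)

/-- The Jacobi polynomial
`P_n^{(α,β)}(x) = Σ_{l=0}^{n} C(n+α, l) C(n+β, n−l) ((x−1)/2)^{n−l} ((x+1)/2)^l`. -/
noncomputable def jacobiP (n : ℕ) (α β : ℝ) (x : ℝ) : ℝ :=
  ∑ l ∈ Finset.range (n + 1),
    genBinom ((n : ℝ) + α) l * genBinom ((n : ℝ) + β) (n - l) *
      ((x - 1) / 2) ^ (n - l) * ((x + 1) / 2) ^ l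

/-- `a` solves the Jacobi-type ODE
`(1−τ²)a'' + 2(p−1)τ a' + (ℓ(ℓ+1) − p(p−1)) a = 0` on `(−1,1)`. -/
def JacobiODESol (p ℓ : ℕ) (a : ℝ → ℝ) : Prop :=
  ∀ τ ∈ Set.Ioo (-1 : ℝ) 1,
    (1 - τ ^ 2) * deriv (deriv a) τ + 2 * ((p : ℝ) - 1) * τ * deriv a τ
      + ((ℓ : ℝ) * ((ℓ : ℝ) + 1) - (p : ℝ) * ((p : ℝ) - 1)) * a τ = 0

lemma genBinom_zero (y : ℝ) : genBinom y 0 = 1 := by simp [genBinom]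

lemma genBinom_succ_mul (y : ℝ) (k : ℕ) :
    genBinom y (k + 1) * (k + 1) = genBinom y k * (y - k) := by
  unfold genBinom
  rw [Finset.prod_range_succ, Nat.factorial_succ]
  have h1 : (Nat.factorial k : ℝ) ≠ 0 := Nat.cast_ne_zero.2 (Nat.factorial_ne_zero k)
  have h2 : ((k:ℝ) + 1) ≠ 0 := by positivity
  push_cast
  field_simp

lemma genBinom_ne_zero (y : ℝ) (k : ℕ) (h : ∀ i ∈ Finset.range k, y - (i:ℝ) ≠ 0) :
    genBinom y k ≠ 0 :=
  div_ne_zero (Finset.prod_ne_zero_iff.2 h) (Nat.cast_ne_zero.2 (Nat.factorial_ne_zero k))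

noncomputable def Acoef (p ℓ : ℕ) (j : ℕ) : ℝ :=
  if j ≤ ℓ then (-1)^p * genBinom ((ℓ:ℝ) + p) j * genBinom ((ℓ:ℝ) - p) (ℓ - j) else 0

lemma Acoef_succ (p ℓ : ℕ) (hlp : ℓ < p) (k : ℕ) (hk : k ≤ ℓ) :
    Acoef p ℓ (k+1) * (((k:ℝ)+1) * ((k:ℝ)+1-p)) =
      Acoef p ℓ k * (((ℓ:ℝ)+p-k) * ((ℓ:ℝ)-k)) := by
  rcases eq_or_lt_of_le hk with rfl | hk'
  · simp [Acoef]
  · -- k < ℓ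
    have hk1 : k + 1 ≤ ℓ := hk'
    rw [Acoef, Acoef, if_pos hk1, if_pos hk]
    have e1 := genBinom_succ_mul ((ℓ:ℝ)+p) k
    have hsub : ℓ - k = (ℓ - (k+1)) + 1 := by omega
    have e2 := genBinom_succ_mul ((ℓ:ℝ)-p) (ℓ - (k+1))
    rw [← hsub] at e2
    have hc : ((ℓ - (k+1) : ℕ) : ℝ) = (ℓ:ℝ) - k - 1 := by
      have : ((ℓ - (k+1) : ℕ) : ℝ) = (ℓ:ℝ) - ((k:ℝ)+1) := by
        rw [Nat.cast_sub hk1]; push_cast; ring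
      rw [this]; ring
    rw [hc] at e2
    -- e2 : genBinom (ℓ-p) (ℓ-k) * ((ℓ:ℝ)-k-1+1) = genBinom (ℓ-p) (ℓ-(k+1)) * ((ℓ-p) - (ℓ-k-1))
    linear_combination (genBinom ((ℓ:ℝ)-p) (ℓ-(k+1)) * ((k:ℝ)+1-p) * (-1)^p) * e1
      - ((-1)^p * genBinom ((ℓ:ℝ)+p) k * ((ℓ:ℝ)+p-k)) * e2

noncomputable def uu (τ : ℝ) : ℝ := (τ - 1) / 2
noncomputable def vv (τ : ℝ) : ℝ := (τ + 1) / 2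

lemma hasDerivAt_uu (τ : ℝ) : HasDerivAt uu (1/2) τ := by
  have : HasDerivAt (fun x : ℝ => (x - 1)/2) (1/2) τ := by
    simpa using ((hasDerivAt_id τ).sub_const 1).div_const 2
  exact this

lemma hasDerivAt_vv (τ : ℝ) : HasDerivAt vv (1/2) τ := by
  have : HasDerivAt (fun x : ℝ => (x + 1)/2) (1/2) τ := by
    simpa using ((hasDerivAt_id τ).add_const 1).div_const 2
  exact this

noncomputable def SS (p ℓ : ℕ) (τ : ℝ) : ℝ :=
  ∑ l ∈ Finset.range (ℓ+1), Acoef p ℓ l * (uu τ ^ (p + ℓ - l) * vv τ ^ l)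

noncomputable def S₁ (p ℓ : ℕ) (τ : ℝ) : ℝ :=
  ∑ l ∈ Finset.range (ℓ+1), Acoef p ℓ l *
    (((p + ℓ - l : ℕ):ℝ) * uu τ ^ (p + ℓ - l - 1) * vv τ ^ l
      + ((l:ℕ):ℝ) * uu τ ^ (p + ℓ - l) * vv τ ^ (l - 1)) / 2

noncomputable def S₂ (p ℓ : ℕ) (τ : ℝ) : ℝ :=
  ∑ l ∈ Finset.range (ℓ+1), Acoef p ℓ l *
    (((p + ℓ - l : ℕ):ℝ) * ((p + ℓ - l - 1 : ℕ):ℝ) * uu τ ^ (p + ℓ - l - 2) * vv τ ^ l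
      + 2 * ((p + ℓ - l : ℕ):ℝ) * ((l:ℕ):ℝ) * uu τ ^ (p + ℓ - l - 1) * vv τ ^ (l - 1)
      + ((l:ℕ):ℝ) * ((l - 1 : ℕ):ℝ) * uu τ ^ (p + ℓ - l) * vv τ ^ (l - 2)) / 4

lemma hasDerivAt_SS (p ℓ : ℕ) (τ : ℝ) : HasDerivAt (SS p ℓ) (S₁ p ℓ τ) τ := by
  unfold SS S₁
  apply HasDerivAt.fun_sum
  intro l _
  have hu := (hasDerivAt_uu τ).pow (p + ℓ - l)
  have hv := (hasDerivAt_vv τ).pow l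
  have := ((hu.mul hv).const_mul (Acoef p ℓ l))
  refine this.congr_deriv ?_
  simp only [Pi.pow_apply]
  ring

lemma hasDerivAt_S₁ (p ℓ : ℕ) (τ : ℝ) : HasDerivAt (S₁ p ℓ) (S₂ p ℓ τ) τ := by
  unfold S₁ S₂
  apply HasDerivAt.fun_sum
  intro l _
  have hu1 := (hasDerivAt_uu τ).pow (p + ℓ - l - 1)
  have hu0 := (hasDerivAt_uu τ).pow (p + ℓ - l)
  have hv0 := (hasDerivAt_vv τ).pow l
  have hv1 := (hasDerivAt_vv τ).pow (l - 1)
  have h1 := ((hu1.const_mul (((p + ℓ - l : ℕ):ℝ))).mul hv0)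
  have h2 := ((hu0.const_mul (((l:ℕ):ℝ)))).mul hv1
  have := ((h1.add h2).const_mul (Acoef p ℓ l)).div_const 2
  refine this.congr_deriv ?_
  simp only [Pi.pow_apply]
  have e1 : p + ℓ - l - 1 - 1 = p + ℓ - l - 2 := by omega
  have e2 : l - 1 - 1 = l - 2 := by omega
  rw [e1, e2]
  have c1 : ((l:ℕ):ℝ) * ((l - 1 : ℕ):ℝ) = ((l - 1 : ℕ):ℝ) * ((l:ℕ):ℝ) := by ring
  ring

noncomputable def alphaC (p ℓ l : ℕ) : ℝ := ((p + ℓ - l : ℕ):ℝ) * ((l:ℝ) - (ℓ:ℝ))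
noncomputable def betaC (p l : ℕ) : ℝ := (l:ℝ) * ((p:ℝ) - (l:ℝ))
noncomputable def gammaC (p ℓ l : ℕ) : ℝ :=
  (ℓ:ℝ) * ((p:ℝ) + (ℓ:ℝ)) - 2 * ((p + ℓ - l : ℕ):ℝ) * (l:ℝ)

lemma term_identity (p ℓ l : ℕ) (hl : l ≤ ℓ) (hlp : ℓ < p) (u : ℝ) :
    (1 - (2*u+1)^2) * ((((p+ℓ-l : ℕ)):ℝ) * ((p+ℓ-l-1 : ℕ):ℝ) * u^(p+ℓ-l-2) * (u+1)^l
        + 2*((p+ℓ-l : ℕ):ℝ)*((l:ℕ):ℝ)*u^(p+ℓ-l-1)*(u+1)^(l-1)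
        + ((l:ℕ):ℝ)*((l-1 : ℕ):ℝ)*u^(p+ℓ-l)*(u+1)^(l-2)) / 4
    + 2*((p:ℝ)-1)*(2*u+1)*((((p+ℓ-l : ℕ):ℝ)*u^(p+ℓ-l-1)*(u+1)^l
        + ((l:ℕ):ℝ)*u^(p+ℓ-l)*(u+1)^(l-1))/2)
    + ((ℓ:ℝ)*((ℓ:ℝ)+1) - (p:ℝ)*((p:ℝ)-1)) * (u^(p+ℓ-l)*(u+1)^l)
    = alphaC p ℓ l * (u^(p+ℓ-(l+1)) * (u+1)^(l+1))
      + betaC p l * (u^(p+ℓ-(l-1)) * (u+1)^(l-1))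
      + gammaC p ℓ l * (u^(p+ℓ-l) * (u+1)^l) := by
  unfold alphaC betaC gammaC
  rcases Nat.lt_or_ge p 2 with hp2 | hp2
  · -- p = 1, hence ℓ = 0, l = 0
    have hp1 : p = 1 := by omega
    have hl0 : ℓ = 0 := by omega
    have hll : l = 0 := by omega
    subst hp1; subst hl0; subst hll
    norm_num
  · obtain ⟨p', rfl⟩ : ∃ p', p = p' + 2 := ⟨p - 2, by omega⟩
    obtain ⟨e, rfl⟩ : ∃ e, ℓ = l + e := ⟨ℓ - l, by omega⟩
    have E0 : p' + 2 + (l + e) - l = p' + e + 2 := by omega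
    have E1 : p' + 2 + (l + e) - l - 1 = p' + e + 1 := by omega
    have E2 : p' + 2 + (l + e) - l - 2 = p' + e := by omega
    have E3 : p' + 2 + (l + e) - (l + 1) = p' + e + 1 := by omega
    rw [E1, E2, E3, E0]
    match l with
    | 0 => push_cast; ring
    | 1 =>
      have E4 : p' + 2 + (1 + e) - (1 - 1) = p' + e + 3 := by omega
      rw [E4]; push_cast; ring
    | (n+2) =>
      have E4 : p' + 2 + (n + 2 + e) - (n + 2 - 1) = p' + e + 3 := by omega
      have E5 : n + 2 - 1 = n + 1 := by omega
      have E6 : n + 2 - 2 = n := by omega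
      rw [E4, E5, E6]; push_cast; ring

lemma Acoef_rec0 (p ℓ : ℕ) (hlp : ℓ < p) :
    Acoef p ℓ 0 * gammaC p ℓ 0 + Acoef p ℓ 1 * betaC p 1 = 0 := by
  have E1 := Acoef_succ p ℓ hlp 0 (Nat.zero_le ℓ)
  unfold gammaC betaC
  have hc : ((p + ℓ - 0 : ℕ):ℝ) = (p:ℝ) + (ℓ:ℝ) := by rw [Nat.sub_zero]; push_cast; ring
  rw [hc]
  push_cast at E1 ⊢
  linear_combination (-1 : ℝ) * E1

lemma Acoef_rec (p ℓ : ℕ) (hlp : ℓ < p) (l : ℕ) (hl : l + 1 ≤ ℓ) :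
    Acoef p ℓ l * alphaC p ℓ l + Acoef p ℓ (l+1) * gammaC p ℓ (l+1)
      + Acoef p ℓ (l+2) * betaC p (l+2) = 0 := by
  have E1 := Acoef_succ p ℓ hlp l (by omega)
  have E2 := Acoef_succ p ℓ hlp (l+1) hl
  unfold alphaC gammaC betaC
  have hc1 : ((p + ℓ - l : ℕ):ℝ) = (p:ℝ) + (ℓ:ℝ) - (l:ℝ) := by
    rw [Nat.cast_sub (by omega)]; push_cast; ring
  have hc2 : ((p + ℓ - (l+1) : ℕ):ℝ) = (p:ℝ) + (ℓ:ℝ) - (l:ℝ) - 1 := by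
    rw [Nat.cast_sub (by omega)]; push_cast; ring
  rw [hc1, hc2]
  push_cast at E1 E2 ⊢
  linear_combination (1 : ℝ) * E1 + (-1 : ℝ) * E2

lemma Acoef_top (p ℓ : ℕ) : Acoef p ℓ (ℓ + 1) = 0 := by simp [Acoef]

lemma comb_sum_zero (p ℓ : ℕ) (hlp : ℓ < p) (M : ℕ → ℝ) :
    ∑ l ∈ Finset.range (ℓ+1), Acoef p ℓ l *
      (alphaC p ℓ l * M (l+1) + betaC p l * M (l-1) + gammaC p ℓ l * M l) = 0 := by
  have split : ∀ l ∈ Finset.range (ℓ+1),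
      Acoef p ℓ l * (alphaC p ℓ l * M (l+1) + betaC p l * M (l-1) + gammaC p ℓ l * M l)
      = Acoef p ℓ l * (alphaC p ℓ l * M (l+1)) + Acoef p ℓ l * (betaC p l * M (l-1))
        + Acoef p ℓ l * (gammaC p ℓ l * M l) := fun l _ => by ring
  rw [Finset.sum_congr rfl split, Finset.sum_add_distrib, Finset.sum_add_distrib]
  have e1 := Finset.sum_range_succ (fun l => Acoef p ℓ l * (alphaC p ℓ l * M (l+1))) ℓ
  have e2 := Finset.sum_range_succ' (fun l => Acoef p ℓ l * (betaC p l * M (l-1))) ℓ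
  have e3 := Finset.sum_range_succ' (fun l => Acoef p ℓ l * (gammaC p ℓ l * M l)) ℓ
  have key : ∀ l ∈ Finset.range ℓ,
      (Acoef p ℓ l * (alphaC p ℓ l * M (l+1))
        + (Acoef p ℓ (l+1) * (betaC p (l+1) * M ((l+1)-1))
        + Acoef p ℓ (l+1) * (gammaC p ℓ (l+1) * M (l+1))))
      = Acoef p ℓ (0+1) * betaC p (0+1) * M 0 * 0
        + (Acoef p ℓ (l+1) * betaC p (l+1) * M l
            - Acoef p ℓ (l+1+1) * betaC p (l+1+1) * M (l+1)) := by
    intro l hl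
    have hrec := Acoef_rec p ℓ hlp l (Finset.mem_range.mp hl)
    simp only [Nat.add_sub_cancel]
    linear_combination M (l+1) * hrec
  have e4 := Finset.sum_add_distrib (s := Finset.range ℓ)
      (f := fun l => Acoef p ℓ l * (alphaC p ℓ l * M (l+1)))
      (g := fun l => Acoef p ℓ (l+1) * (betaC p (l+1) * M ((l+1)-1))
        + Acoef p ℓ (l+1) * (gammaC p ℓ (l+1) * M (l+1)))
  have e4b := Finset.sum_add_distrib (s := Finset.range ℓ)
      (f := fun l => Acoef p ℓ (l+1) * (betaC p (l+1) * M ((l+1)-1)))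
      (g := fun l => Acoef p ℓ (l+1) * (gammaC p ℓ (l+1) * M (l+1)))
  have e5 : ∑ l ∈ Finset.range ℓ,
      (Acoef p ℓ l * (alphaC p ℓ l * M (l+1))
        + (Acoef p ℓ (l+1) * (betaC p (l+1) * M ((l+1)-1))
        + Acoef p ℓ (l+1) * (gammaC p ℓ (l+1) * M (l+1)))) =
      Acoef p ℓ (0+1) * betaC p (0+1) * M 0
        - Acoef p ℓ (ℓ+1) * betaC p (ℓ+1) * M ℓ := by
    rw [Finset.sum_congr rfl key]
    rw [Finset.sum_add_distrib, Finset.sum_const,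
      Finset.sum_range_sub' (fun j => Acoef p ℓ (j+1) * betaC p (j+1) * M j) ℓ]
    simp
  have hα : alphaC p ℓ ℓ = 0 := by simp [alphaC]
  have hβ : betaC p 0 = 0 := by simp [betaC]
  have htop : Acoef p ℓ (ℓ+1) * betaC p (ℓ+1) * M ℓ = 0 := by simp [Acoef_top]
  have h0 := Acoef_rec0 p ℓ hlp
  rw [hα] at e1
  rw [hβ] at e2
  linear_combination e1 + e2 + e3 + e5 - e4 - e4b - htop + M 0 * h0

lemma SS_ode (p ℓ : ℕ) (hlp : ℓ < p) (τ : ℝ) :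
    (1 - τ^2) * S₂ p ℓ τ + 2*((p:ℝ)-1)*τ*(S₁ p ℓ τ)
      + ((ℓ:ℝ)*((ℓ:ℝ)+1) - (p:ℝ)*((p:ℝ)-1)) * SS p ℓ τ = 0 := by
  have hv : vv τ = uu τ + 1 := by unfold uu vv; ring
  have hτ : τ = 2 * uu τ + 1 := by unfold uu; ring
  unfold SS S₁ S₂
  rw [hv, Finset.mul_sum, Finset.mul_sum, Finset.mul_sum, ← Finset.sum_add_distrib,
    ← Finset.sum_add_distrib]
  have key : ∀ l ∈ Finset.range (ℓ+1),
      (1 - τ^2) * (Acoef p ℓ l *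
        (((p + ℓ - l : ℕ):ℝ) * ((p + ℓ - l - 1 : ℕ):ℝ) * uu τ ^ (p + ℓ - l - 2) * (uu τ + 1) ^ l
          + 2 * ((p + ℓ - l : ℕ):ℝ) * ((l:ℕ):ℝ) * uu τ ^ (p + ℓ - l - 1) * (uu τ + 1) ^ (l - 1)
          + ((l:ℕ):ℝ) * ((l - 1 : ℕ):ℝ) * uu τ ^ (p + ℓ - l) * (uu τ + 1) ^ (l - 2)) / 4)
      + 2*((p:ℝ)-1)*τ*(Acoef p ℓ l *
          (((p + ℓ - l : ℕ):ℝ) * uu τ ^ (p + ℓ - l - 1) * (uu τ + 1) ^ l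
            + ((l:ℕ):ℝ) * uu τ ^ (p + ℓ - l) * (uu τ + 1) ^ (l - 1)) / 2)
      + ((ℓ:ℝ)*((ℓ:ℝ)+1) - (p:ℝ)*((p:ℝ)-1)) * (Acoef p ℓ l * (uu τ ^ (p + ℓ - l) * (uu τ + 1) ^ l))
      = Acoef p ℓ l *
          (alphaC p ℓ l * (fun j => uu τ ^ (p + ℓ - j) * (uu τ + 1) ^ j) (l+1)
            + betaC p l * (fun j => uu τ ^ (p + ℓ - j) * (uu τ + 1) ^ j) (l-1)
            + gammaC p ℓ l * (fun j => uu τ ^ (p + ℓ - j) * (uu τ + 1) ^ j) l) := by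
    intro l hl
    have hl' : l ≤ ℓ := by have := Finset.mem_range.mp hl; omega
    have hid := term_identity p ℓ l hl' hlp (uu τ)
    rw [← hτ] at hid
    linear_combination (Acoef p ℓ l) * hid
  rw [Finset.sum_congr rfl key]
  exact comb_sum_zero p ℓ hlp (fun j => uu τ ^ (p + ℓ - j) * (uu τ + 1) ^ j)

lemma Q1_eq (p ℓ : ℕ) (hlp : ℓ < p) (τ : ℝ) :
    ((1 - τ)/2)^p * jacobiP ℓ (p:ℝ) (-(p:ℝ)) τ = SS p ℓ τ := by
  unfold jacobiP SS Acoef uu vv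
  rw [Finset.mul_sum]
  apply Finset.sum_congr rfl
  intro l hl
  have hl' : l ≤ ℓ := by have := Finset.mem_range.mp hl; omega
  rw [if_pos hl']
  have h1 : ((ℓ:ℝ) + -(p:ℝ)) = (ℓ:ℝ) - p := by ring
  rw [h1]
  have h3 : ((τ-1)/2 : ℝ) ^ (p + ℓ - l) = ((τ-1)/2) ^ p * ((τ-1)/2) ^ (ℓ - l) := by
    rw [← pow_add]; congr 1; omega
  have h2 : ((1-τ)/2 : ℝ)^p = (-1)^p * ((τ-1)/2)^p := by
    rw [← neg_pow]; congr 1; ring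
  rw [h3, h2]
  ring

lemma jacobiP_reflect (n : ℕ) (α β : ℝ) (x : ℝ) :
    jacobiP n α β (-x) = (-1)^n * jacobiP n β α x := by
  unfold jacobiP
  rw [← Finset.sum_range_reflect]
  rw [Finset.mul_sum]
  apply Finset.sum_congr rfl
  intro l hl
  have hl' : l ≤ n := by have := Finset.mem_range.mp hl; omega
  have h0 : n + 1 - 1 - l = n - l := by omega
  have h1 : n - (n - l) = l := by omega
  rw [h0, h1]
  have h2 : ((-x - 1)/2 : ℝ) ^ l = (-1)^l * ((x+1)/2)^l := by
    rw [← neg_pow]; congr 1; ring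
  have h3 : ((-x + 1)/2 : ℝ) ^ (n - l) = (-1)^(n-l) * ((x-1)/2)^(n-l) := by
    rw [← neg_pow]; congr 1; ring
  rw [h2, h3]
  have hpow : (-1:ℝ)^(n-l) * (-1:ℝ)^l = (-1:ℝ)^n := by
    rw [← pow_add]; congr 1; omega
  linear_combination (genBinom ((n:ℝ)+α) (n-l) * genBinom ((n:ℝ)+β) l
    * ((x+1)/2)^l * ((x-1)/2)^(n-l)) * hpow

noncomputable def TT (p ℓ : ℕ) (τ : ℝ) : ℝ := (-1)^ℓ * SS p ℓ (-τ)
noncomputable def T₁ (p ℓ : ℕ) (τ : ℝ) : ℝ := -((-1)^ℓ * S₁ p ℓ (-τ))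
noncomputable def T₂ (p ℓ : ℕ) (τ : ℝ) : ℝ := (-1)^ℓ * S₂ p ℓ (-τ)

lemma hasDerivAt_TT (p ℓ : ℕ) (τ : ℝ) : HasDerivAt (TT p ℓ) (T₁ p ℓ τ) τ := by
  unfold TT T₁
  have h1 : HasDerivAt (fun x : ℝ => -x) (-1 : ℝ) τ := hasDerivAt_neg τ
  have h2 := (hasDerivAt_SS p ℓ (-τ)).comp τ h1
  have h3 := h2.const_mul ((-1:ℝ)^ℓ)
  refine h3.congr_deriv ?_
  all_goals first
  | ring
  | (funext x; simp [Function.comp])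
  | rfl

lemma hasDerivAt_T₁ (p ℓ : ℕ) (τ : ℝ) : HasDerivAt (T₁ p ℓ) (T₂ p ℓ τ) τ := by
  unfold T₁ T₂
  have h1 : HasDerivAt (fun x : ℝ => -x) (-1 : ℝ) τ := hasDerivAt_neg τ
  have h2 := (hasDerivAt_S₁ p ℓ (-τ)).comp τ h1
  have h3 := (h2.const_mul ((-1:ℝ)^ℓ)).neg
  refine h3.congr_deriv ?_
  all_goals first
  | ring
  | (funext x; simp [Function.comp])
  | rfl

lemma TT_ode (p ℓ : ℕ) (hlp : ℓ < p) (τ : ℝ) :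
    (1 - τ^2) * T₂ p ℓ τ + 2*((p:ℝ)-1)*τ*(T₁ p ℓ τ)
      + ((ℓ:ℝ)*((ℓ:ℝ)+1) - (p:ℝ)*((p:ℝ)-1)) * TT p ℓ τ = 0 := by
  unfold TT T₁ T₂
  linear_combination ((-1:ℝ)^ℓ) * SS_ode p ℓ hlp (-τ)

lemma Q3_eq (p ℓ : ℕ) (hlp : ℓ < p) (τ : ℝ) :
    ((1 + τ)/2)^p * jacobiP ℓ (-(p:ℝ)) (p:ℝ) τ = TT p ℓ τ := by
  unfold TT
  rw [← Q1_eq p ℓ hlp (-τ)]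
  rw [jacobiP_reflect ℓ ((p:ℝ)) (-(p:ℝ)) τ]
  have hx : ((1 - -τ)/2 : ℝ) = (1+τ)/2 := by ring
  rw [hx]
  have h12 : (-1:ℝ)^(ℓ*2) = 1 := by rw [pow_mul', neg_one_sq, one_pow]
  linear_combination (-(jacobiP ℓ (-(p:ℝ)) (p:ℝ) τ * ((1+τ)/2)^p)) * h12

noncomputable def qS (p ℓ : ℕ) : Polynomial ℝ :=
  ∑ l ∈ Finset.range (ℓ+1), Polynomial.C (Acoef p ℓ l) *
    (Polynomial.C (1/2 : ℝ) * (Polynomial.X - 1))^(p + ℓ - l) *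
    (Polynomial.C (1/2 : ℝ) * (Polynomial.X + 1))^l

lemma qS_eval (p ℓ : ℕ) (τ : ℝ) : (qS p ℓ).eval τ = SS p ℓ τ := by
  unfold qS SS uu vv
  rw [Polynomial.eval_finset_sum]
  apply Finset.sum_congr rfl
  intro l _
  simp only [Polynomial.eval_mul, Polynomial.eval_pow, Polynomial.eval_C, Polynomial.eval_add,
    Polynomial.eval_sub, Polynomial.eval_X, Polynomial.eval_one]
  have h1 : (1/2 : ℝ) * (τ - 1) = (τ - 1)/2 := by ring
  have h2 : (1/2 : ℝ) * (τ + 1) = (τ + 1)/2 := by ring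
  rw [h1, h2, mul_assoc]

noncomputable def qT (p ℓ : ℕ) : Polynomial ℝ :=
  Polynomial.C ((-1:ℝ)^ℓ) * (qS p ℓ).comp (-Polynomial.X)

lemma qT_eval (p ℓ : ℕ) (τ : ℝ) : (qT p ℓ).eval τ = TT p ℓ τ := by
  unfold qT TT
  simp [Polynomial.eval_comp, qS_eval]

lemma genB_lp_ne (p ℓ : ℕ) (hlp : ℓ < p) : genBinom ((ℓ:ℝ) - (p:ℝ)) ℓ ≠ 0 := by
  apply genBinom_ne_zero
  intro i _
  have h2 : (ℓ:ℝ) < p := Nat.cast_lt.mpr hlp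
  have h3 : (0:ℝ) ≤ i := Nat.cast_nonneg i
  intro hc
  linarith [hc]

lemma TT_one (p ℓ : ℕ) (hlp : ℓ < p) : TT p ℓ 1 = genBinom ((ℓ:ℝ) - (p:ℝ)) ℓ := by
  rw [← Q3_eq p ℓ hlp 1]
  have h1 : ((1 + 1)/2 : ℝ)^p = 1 := by norm_num
  rw [h1, one_mul]
  unfold jacobiP
  rw [Finset.sum_eq_single ℓ]
  · have : ((ℓ:ℝ) + -(p:ℝ)) = (ℓ:ℝ) - p := by ring
    simp [this, genBinom_zero]
  · intro l hl hne
    have hl' : l ≤ ℓ := by have := Finset.mem_range.mp hl; omega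
    have : ((1 - 1)/2 : ℝ) ^ (ℓ - l) = 0 := by
      rw [show ((1-1)/2 : ℝ) = 0 by norm_num]
      exact zero_pow (by omega)
    rw [this]; ring
  · intro hc; exact absurd (Finset.self_mem_range_succ ℓ) hc

lemma SS_one (p ℓ : ℕ) (hlp : ℓ < p) : SS p ℓ 1 = 0 := by
  rw [← Q1_eq p ℓ hlp 1]
  rw [show ((1-1)/2 : ℝ) = 0 by norm_num, zero_pow (by omega : p ≠ 0), zero_mul]

lemma TT_negone (p ℓ : ℕ) (hlp : ℓ < p) : TT p ℓ (-1) = 0 := by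
  rw [← Q3_eq p ℓ hlp (-1)]
  rw [show ((1 + -1)/2 : ℝ) = 0 by norm_num, zero_pow (by omega : p ≠ 0), zero_mul]

lemma SS_negone (p ℓ : ℕ) (hlp : ℓ < p) :
    SS p ℓ (-1) = (-1)^ℓ * genBinom ((ℓ:ℝ) - (p:ℝ)) ℓ := by
  rw [← Q1_eq p ℓ hlp (-1)]
  have h1 : ((1 - -1)/2 : ℝ)^p = 1 := by norm_num
  rw [h1, one_mul]
  unfold jacobiP
  rw [Finset.sum_eq_single 0]
  · have h2 : ((ℓ:ℝ) + -(p:ℝ)) = (ℓ:ℝ) - p := by ring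
    have h3 : ((-1 - 1)/2 : ℝ) = -1 := by norm_num
    simp [h2, h3, genBinom_zero]
    ring
  · intro l _ hne
    have : ((-1 + 1)/2 : ℝ) ^ l = 0 := by
      rw [show ((-1+1)/2 : ℝ) = 0 by norm_num]
      exact zero_pow hne
    rw [this]; ring
  · intro hc; exact absurd (Finset.mem_range.mpr (by omega)) hc

lemma indep (p ℓ : ℕ) (hlp : ℓ < p) (c d : ℝ)
    (h : ∀ τ ∈ Set.Ioo (-1:ℝ) 1, c * SS p ℓ τ + d * TT p ℓ τ = 0) : c = 0 ∧ d = 0 := by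
  set r : Polynomial ℝ := Polynomial.C c * qS p ℓ + Polynomial.C d * qT p ℓ with hr
  have hroots : r = 0 := by
    apply Polynomial.eq_zero_of_infinite_isRoot
    apply (Set.Ioo_infinite (by norm_num : (-1:ℝ) < 1)).mono
    intro τ hτ
    simp only [Set.mem_setOf_eq, Polynomial.IsRoot, hr, Polynomial.eval_add,
      Polynomial.eval_mul, Polynomial.eval_C, qS_eval, qT_eval]
    exact h τ hτ
  have hall : ∀ τ : ℝ, c * SS p ℓ τ + d * TT p ℓ τ = 0 := by
    intro τ
    have := congrArg (Polynomial.eval τ) hroots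
    simpa [hr, qS_eval, qT_eval] using this
  have h1 := hall 1
  rw [SS_one p ℓ hlp, TT_one p ℓ hlp] at h1
  have hd : d = 0 := by
    have hg := genB_lp_ne p ℓ hlp
    simp only [mul_zero, zero_mul, zero_add] at h1
    exact (mul_eq_zero.mp h1).resolve_right hg
  subst hd
  have h2 := hall (-1)
  rw [SS_negone p ℓ hlp, TT_negone p ℓ hlp] at h2
  have hc : c = 0 := by
    have hne : (-1:ℝ)^ℓ * genBinom ((ℓ:ℝ) - (p:ℝ)) ℓ ≠ 0 :=
      mul_ne_zero (pow_ne_zero ℓ (by norm_num)) (genB_lp_ne p ℓ hlp)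
    simp only [mul_zero, zero_mul, add_zero] at h2
    rcases mul_eq_zero.mp h2 with h | h
    · exact h
    · exact absurd h hne
  exact ⟨hc, rfl⟩

noncomputable def lam (p ℓ : ℕ) : ℝ := (ℓ:ℝ)*((ℓ:ℝ)+1) - (p:ℝ)*((p:ℝ)-1)

noncomputable def vf (p ℓ : ℕ) (t : ℝ) (x : ℝ × ℝ) : ℝ × ℝ :=
  (x.2, (2*((p:ℝ)-1)*t*x.2 + lam p ℓ * x.1) / (t^2 - 1))

noncomputable def Kc (p ℓ : ℕ) (r : ℝ) : ℝ := (2*(p:ℝ) + |lam p ℓ|)/(1 - r^2) + 1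

lemma vf_lipschitz (p ℓ : ℕ) (hp : 1 ≤ p) (r : ℝ) (hr0 : 0 ≤ r) (hr1 : r < 1)
    (t : ℝ) (ht : |t| ≤ r) :
    ∀ x y : ℝ × ℝ, dist (vf p ℓ t x) (vf p ℓ t y) ≤ Kc p ℓ r * dist x y := by
  intro x y
  have hr2 : 0 < 1 - r^2 := by nlinarith
  have ht2 : t^2 ≤ r^2 := by
    have := abs_nonneg t
    nlinarith [sq_abs t, sq_nonneg (|t| - r)]
  have ht1 : 0 < 1 - t^2 := by nlinarith
  have hKpos : 0 ≤ (2*(p:ℝ) + |lam p ℓ|)/(1 - r^2) := by positivity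
  have hK1 : 1 ≤ Kc p ℓ r := by unfold Kc; linarith
  have hd1 : dist x.1 y.1 ≤ dist x y := by
    rw [Prod.dist_eq]; exact le_max_left _ _
  have hd2 : dist x.2 y.2 ≤ dist x y := by
    rw [Prod.dist_eq]; exact le_max_right _ _
  have hdnn : 0 ≤ dist x y := dist_nonneg
  rw [Prod.dist_eq]
  apply max_le
  · -- first component
    simp only [vf]
    calc dist x.2 y.2 ≤ dist x y := hd2
      _ ≤ Kc p ℓ r * dist x y := le_mul_of_one_le_left hdnn hK1
  · -- second component
    simp only [vf, Real.dist_eq]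
    have hden : t^2 - 1 ≠ 0 := by intro hc; nlinarith
    rw [div_sub_div_same, abs_div]
    have habs_den : |t^2 - 1| = 1 - t^2 := by
      rw [abs_of_neg (by nlinarith)]; ring
    rw [habs_den]
    rw [div_le_iff₀ ht1]
    have hnum : |2*((p:ℝ)-1)*t*x.2 + lam p ℓ * x.1 - (2*((p:ℝ)-1)*t*y.2 + lam p ℓ * y.1)|
        ≤ 2*((p:ℝ)-1)*|t| * |x.2 - y.2| + |lam p ℓ| * |x.1 - y.1| := by
      have h1 : 2*((p:ℝ)-1)*t*x.2 + lam p ℓ * x.1 - (2*((p:ℝ)-1)*t*y.2 + lam p ℓ * y.1)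
          = 2*((p:ℝ)-1)*t*(x.2 - y.2) + lam p ℓ * (x.1 - y.1) := by ring
      rw [h1]
      calc |2*((p:ℝ)-1)*t*(x.2 - y.2) + lam p ℓ * (x.1 - y.1)|
          ≤ |2*((p:ℝ)-1)*t*(x.2 - y.2)| + |lam p ℓ * (x.1 - y.1)| := abs_add_le _ _
        _ = 2*((p:ℝ)-1)*|t| * |x.2 - y.2| + |lam p ℓ| * |x.1 - y.1| := by
            rw [abs_mul, abs_mul, abs_mul, abs_mul]
            have hp1 : |(2:ℝ)| = 2 := by norm_num
            have hp2 : |(p:ℝ)-1| = (p:ℝ)-1 := by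
              rw [abs_of_nonneg]
              have : (1:ℝ) ≤ p := by exact_mod_cast hp
              linarith
            rw [hp1, hp2]
    have hx1 : |x.1 - y.1| = dist x.1 y.1 := (Real.dist_eq _ _).symm
    have hx2 : |x.2 - y.2| = dist x.2 y.2 := (Real.dist_eq _ _).symm
    have hpr : (1:ℝ) ≤ p := by exact_mod_cast hp
    calc |2*((p:ℝ)-1)*t*x.2 + lam p ℓ * x.1 - (2*((p:ℝ)-1)*t*y.2 + lam p ℓ * y.1)|
        ≤ 2*((p:ℝ)-1)*|t| * |x.2 - y.2| + |lam p ℓ| * |x.1 - y.1| := hnum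
      _ ≤ 2*(p:ℝ) * dist x y + |lam p ℓ| * dist x y := by
          rw [hx1, hx2] at *
          have habs : 2*((p:ℝ)-1)*|t| ≤ 2*(p:ℝ) := by
            have h0t : 0 ≤ |t| := abs_nonneg t
            have h1t : |t| ≤ 1 := le_trans ht (le_of_lt hr1)
            nlinarith
          have hb1 : 2*((p:ℝ)-1)*|t| * dist x.2 y.2 ≤ 2*(p:ℝ) * dist x y := by
            have := mul_le_mul habs hd2 dist_nonneg (by positivity)
            linarith [this]
          have hb2 : |lam p ℓ| * dist x.1 y.1 ≤ |lam p ℓ| * dist x y :=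
            mul_le_mul_of_nonneg_left hd1 (abs_nonneg _)
          linarith
      _ = (2*(p:ℝ) + |lam p ℓ|) * dist x y := by ring
      _ ≤ Kc p ℓ r * dist x y * (1 - t^2) := by
          have hle : (2*(p:ℝ) + |lam p ℓ|) ≤ Kc p ℓ r * (1 - t^2) := by
            unfold Kc
            rw [add_mul, div_mul_eq_mul_div, one_mul]
            have hfrac : (2*(p:ℝ) + |lam p ℓ|) ≤ (2*(p:ℝ) + |lam p ℓ|) * (1 - t^2) / (1 - r^2) := by
              rw [le_div_iff₀ hr2]
              have hnn : 0 ≤ 2*(p:ℝ) + |lam p ℓ| := by positivity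
              nlinarith
            linarith [ht1.le]
          calc (2*(p:ℝ) + |lam p ℓ|) * dist x y ≤ (Kc p ℓ r * (1 - t^2)) * dist x y :=
                mul_le_mul_of_nonneg_right hle hdnn
            _ = Kc p ℓ r * dist x y * (1 - t^2) := by ring

noncomputable def clampTo (r t : ℝ) : ℝ := max (-r) (min r t)

lemma clampTo_eq (r t : ℝ) (h1 : -r ≤ t) (h2 : t ≤ r) : clampTo r t = t := by
  unfold clampTo
  rw [min_eq_right h2, max_eq_right h1]

lemma clampTo_abs (r t : ℝ) (hr : 0 ≤ r) : |clampTo r t| ≤ r := by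
  unfold clampTo
  rw [abs_le]
  constructor
  · exact le_max_left _ _
  · exact max_le (by linarith) (min_le_left _ _)

lemma ode_unique_zero (p ℓ : ℕ) (hp : 1 ≤ p) (w w' : ℝ → ℝ)
    (hw : ∀ τ ∈ Set.Ioo (-1:ℝ) 1, HasDerivAt w (w' τ) τ)
    (hw' : ∀ τ ∈ Set.Ioo (-1:ℝ) 1, HasDerivAt w'
      ((2*((p:ℝ)-1)*τ*(w' τ) + lam p ℓ * w τ)/(τ^2-1)) τ)
    (h0 : w 0 = 0) (h0' : w' 0 = 0) :
    ∀ τ ∈ Set.Ioo (-1:ℝ) 1, w τ = 0 := by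
  intro τ hτ
  obtain ⟨hτ1, hτ2⟩ := hτ
  set r : ℝ := (1 + |τ|)/2 with hrdef
  have habs : |τ| < 1 := abs_lt.mpr ⟨hτ1, hτ2⟩
  have hr0 : 0 ≤ r := by positivity
  have hr1 : r < 1 := by rw [hrdef]; linarith
  have hτr : |τ| < r := by rw [hrdef]; linarith
  have hKnn : 0 ≤ Kc p ℓ r := by
    have : 0 < 1 - r^2 := by nlinarith
    unfold Kc; positivity
  have hLip : ∀ t : ℝ, LipschitzOnWith (Real.toNNReal (Kc p ℓ r))
      (vf p ℓ (clampTo r t)) (Set.univ : Set (ℝ × ℝ)) := by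
    intro t
    apply LipschitzOnWith.of_dist_le_mul
    intro x _ y _
    rw [Real.coe_toNNReal _ hKnn]
    exact vf_lipschitz p ℓ hp r hr0 hr1 (clampTo r t) (clampTo_abs r t hr0) x y
  have hsub : Set.Ioo (-r) r ⊆ Set.Ioo (-1:ℝ) 1 := by
    intro t ht
    exact ⟨by linarith [ht.1], by linarith [ht.2]⟩
  have hr0' : 0 < r := by positivity
  have hf' : ∀ t ∈ Set.Ioo (-r) r,
      HasDerivAt (fun t => (w t, w' t)) (vf p ℓ (clampTo r t) ((fun t => (w t, w' t)) t)) t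
        ∧ (fun t => (w t, w' t)) t ∈ (Set.univ : Set (ℝ × ℝ)) := by
    intro t ht
    refine ⟨?_, trivial⟩
    have ht' : t ∈ Set.Ioo (-1:ℝ) 1 := hsub ht
    have hclamp : clampTo r t = t := clampTo_eq r t (le_of_lt ht.1) (le_of_lt ht.2)
    have hd := (hw t ht').prodMk (hw' t ht')
    simp only [hclamp]
    simpa [vf] using hd
  have hg' : ∀ t ∈ Set.Ioo (-r) r,
      HasDerivAt (fun _ : ℝ => ((0:ℝ), (0:ℝ))) (vf p ℓ (clampTo r t) ((0:ℝ), (0:ℝ))) t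
        ∧ ((0:ℝ), (0:ℝ)) ∈ (Set.univ : Set (ℝ × ℝ)) := by
    intro t ht
    refine ⟨?_, trivial⟩
    have : vf p ℓ (clampTo r t) ((0:ℝ), (0:ℝ)) = ((0:ℝ), (0:ℝ)) := by
      unfold vf; simp
    rw [this]
    exact hasDerivAt_const t _
  have key := ODE_solution_unique_of_mem_Ioo (t₀ := 0) (a := -r) (b := r) (fun t _ => hLip t)
    (Set.mem_Ioo.mpr ⟨by linarith, by linarith⟩) hf' hg' (by simp [h0, h0'])
  have hτmem : τ ∈ Set.Ioo (-r) r := by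
    rw [Set.mem_Ioo]
    constructor
    · linarith [neg_abs_le τ]
    · linarith [le_abs_self τ]
  have := key hτmem
  exact congrArg Prod.fst this

lemma combo_zero (p ℓ : ℕ) (hlp : ℓ < p) (c d : ℝ)
    (hc0 : c * SS p ℓ 0 + d * TT p ℓ 0 = 0)
    (hc1 : c * S₁ p ℓ 0 + d * T₁ p ℓ 0 = 0) : c = 0 ∧ d = 0 := by
  have hp : 1 ≤ p := by omega
  set w : ℝ → ℝ := fun τ => c * SS p ℓ τ + d * TT p ℓ τ with hwdef
  set w' : ℝ → ℝ := fun τ => c * S₁ p ℓ τ + d * T₁ p ℓ τ with hwdef'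
  have hw : ∀ τ ∈ Set.Ioo (-1:ℝ) 1, HasDerivAt w (w' τ) τ := fun τ _ =>
    ((hasDerivAt_SS p ℓ τ).const_mul c).add ((hasDerivAt_TT p ℓ τ).const_mul d)
  have hw' : ∀ τ ∈ Set.Ioo (-1:ℝ) 1, HasDerivAt w'
      ((2*((p:ℝ)-1)*τ*(w' τ) + lam p ℓ * w τ)/(τ^2-1)) τ := by
    intro τ hτ
    have hne : τ^2 - 1 ≠ 0 := by
      obtain ⟨h1, h2⟩ := hτ
      intro hcon; nlinarith
    have hd : HasDerivAt w' (c * S₂ p ℓ τ + d * T₂ p ℓ τ) τ :=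
      ((hasDerivAt_S₁ p ℓ τ).const_mul c).add ((hasDerivAt_T₁ p ℓ τ).const_mul d)
    have hval : c * S₂ p ℓ τ + d * T₂ p ℓ τ
        = (2*((p:ℝ)-1)*τ*(w' τ) + lam p ℓ * w τ)/(τ^2-1) := by
      rw [eq_div_iff hne]
      have h2 := SS_ode p ℓ hlp τ
      have h3 := TT_ode p ℓ hlp τ
      simp only [hwdef, hwdef', lam]
      linear_combination (-c) * h2 - d * h3
    rw [← hval]
    exact hd
  have hzero := ode_unique_zero p ℓ hp w w' hw hw' (by simpa using hc0) (by simpa using hc1)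
  exact indep p ℓ hlp c d hzero

lemma wronskian_ne (p ℓ : ℕ) (hlp : ℓ < p) :
    SS p ℓ 0 * T₁ p ℓ 0 - S₁ p ℓ 0 * TT p ℓ 0 ≠ 0 := by
  intro hW
  by_cases hS : SS p ℓ 0 ≠ 0
  · have := combo_zero p ℓ hlp (-(TT p ℓ 0)) (SS p ℓ 0)
      (by ring) (by linear_combination hW)
    exact hS this.2
  · push_neg at hS
    by_cases hS' : S₁ p ℓ 0 ≠ 0
    · have := combo_zero p ℓ hlp (-(T₁ p ℓ 0)) (S₁ p ℓ 0)
        (by linear_combination -hW) (by ring)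
      exact hS' this.2
    · push_neg at hS'
      have := combo_zero p ℓ hlp 1 0 (by simp [hS]) (by simp [hS'])
      exact one_ne_zero this.1

lemma SS_sol (p ℓ : ℕ) (hlp : ℓ < p) : JacobiODESol p ℓ (SS p ℓ) := by
  intro τ _
  have d1 : deriv (SS p ℓ) = S₁ p ℓ := funext fun x => (hasDerivAt_SS p ℓ x).deriv
  rw [d1, (hasDerivAt_S₁ p ℓ τ).deriv]
  exact SS_ode p ℓ hlp τ

lemma TT_sol (p ℓ : ℕ) (hlp : ℓ < p) : JacobiODESol p ℓ (TT p ℓ) := by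
  intro τ _
  have d1 : deriv (TT p ℓ) = T₁ p ℓ := funext fun x => (hasDerivAt_TT p ℓ x).deriv
  rw [d1, (hasDerivAt_T₁ p ℓ τ).deriv]
  exact TT_ode p ℓ hlp τ

/-- For `0 ≤ ℓ < p`, the functions `Q₁(τ) = ((1−τ)/2)^p P_ℓ^{(p,−p)}(τ)` and
`Q₃(τ) = ((1+τ)/2)^p P_ℓ^{(−p,p)}(τ)` are polynomial, solve the Jacobi-type ODE with
parameters `(p, ℓ)` on `(−1,1)`, are linearly independent, and every solution of this ODE
is a unique linear combination of them. -/
theorem stmt7 (p ℓ : ℕ) (h : ℓ < p) :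
    let Q₁ : ℝ → ℝ := fun τ => ((1 - τ) / 2) ^ p * jacobiP ℓ (p : ℝ) (-(p : ℝ)) τ
    let Q₃ : ℝ → ℝ := fun τ => ((1 + τ) / 2) ^ p * jacobiP ℓ (-(p : ℝ)) (p : ℝ) τ
    (∃ q : Polynomial ℝ, ∀ τ : ℝ, Q₁ τ = q.eval τ) ∧
    (∃ q : Polynomial ℝ, ∀ τ : ℝ, Q₃ τ = q.eval τ) ∧
    JacobiODESol p ℓ Q₁ ∧ JacobiODESol p ℓ Q₃ ∧
    (∀ c d : ℝ, (∀ τ ∈ Set.Ioo (-1 : ℝ) 1, c * Q₁ τ + d * Q₃ τ = 0) → c = 0 ∧ d = 0) ∧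
    (∀ a : ℝ → ℝ,
      (∀ τ ∈ Set.Ioo (-1 : ℝ) 1, DifferentiableAt ℝ a τ) →
      (∀ τ ∈ Set.Ioo (-1 : ℝ) 1, DifferentiableAt ℝ (deriv a) τ) →
      JacobiODESol p ℓ a →
      ∃! cd : ℝ × ℝ, ∀ τ ∈ Set.Ioo (-1 : ℝ) 1, a τ = cd.1 * Q₁ τ + cd.2 * Q₃ τ) := by

  intro Q₁ Q₃
  have hQ1 : Q₁ = SS p ℓ := funext fun τ => by
    show ((1 - τ) / 2) ^ p * jacobiP ℓ (p : ℝ) (-(p : ℝ)) τ = SS p ℓ τ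
    exact Q1_eq p ℓ h τ
  have hQ3 : Q₃ = TT p ℓ := funext fun τ => by
    show ((1 + τ) / 2) ^ p * jacobiP ℓ (-(p : ℝ)) (p : ℝ) τ = TT p ℓ τ
    exact Q3_eq p ℓ h τ
  rw [hQ1, hQ3]
  refine ⟨⟨qS p ℓ, fun τ => (qS_eval p ℓ τ).symm⟩, ⟨qT p ℓ, fun τ => (qT_eval p ℓ τ).symm⟩,
    SS_sol p ℓ h, TT_sol p ℓ h, fun c d hcd => indep p ℓ h c d hcd, ?_⟩
  intro a ha1 ha2 hode
  have hp : 1 ≤ p := by omega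
  have hW := wronskian_ne p ℓ h
  have h0mem : (0:ℝ) ∈ Set.Ioo (-1:ℝ) 1 := by norm_num
  set W : ℝ := SS p ℓ 0 * T₁ p ℓ 0 - S₁ p ℓ 0 * TT p ℓ 0 with hWdef
  set c : ℝ := (a 0 * T₁ p ℓ 0 - deriv a 0 * TT p ℓ 0) / W with hcdef
  set d : ℝ := (SS p ℓ 0 * deriv a 0 - S₁ p ℓ 0 * a 0) / W with hddef
  have hic0 : a 0 - c * SS p ℓ 0 - d * TT p ℓ 0 = 0 := by
    rw [hcdef, hddef]
    field_simp
    ring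
  have hic1 : deriv a 0 - c * S₁ p ℓ 0 - d * T₁ p ℓ 0 = 0 := by
    rw [hcdef, hddef]
    field_simp
    ring
  set w : ℝ → ℝ := fun τ => a τ - c * SS p ℓ τ - d * TT p ℓ τ with hwdef
  set w' : ℝ → ℝ := fun τ => deriv a τ - c * S₁ p ℓ τ - d * T₁ p ℓ τ with hwdef'
  have hw : ∀ τ ∈ Set.Ioo (-1:ℝ) 1, HasDerivAt w (w' τ) τ := fun τ hτ =>
    ((ha1 τ hτ).hasDerivAt.sub ((hasDerivAt_SS p ℓ τ).const_mul c)).sub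
      ((hasDerivAt_TT p ℓ τ).const_mul d)
  have hw' : ∀ τ ∈ Set.Ioo (-1:ℝ) 1, HasDerivAt w'
      ((2*((p:ℝ)-1)*τ*(w' τ) + lam p ℓ * w τ)/(τ^2-1)) τ := by
    intro τ hτ
    have hne : τ^2 - 1 ≠ 0 := by
      obtain ⟨h1, h2⟩ := hτ
      intro hcon; nlinarith
    have hd : HasDerivAt w' (deriv (deriv a) τ - c * S₂ p ℓ τ - d * T₂ p ℓ τ) τ :=
      ((ha2 τ hτ).hasDerivAt.sub ((hasDerivAt_S₁ p ℓ τ).const_mul c)).sub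
        ((hasDerivAt_T₁ p ℓ τ).const_mul d)
    have hval : deriv (deriv a) τ - c * S₂ p ℓ τ - d * T₂ p ℓ τ
        = (2*((p:ℝ)-1)*τ*(w' τ) + lam p ℓ * w τ)/(τ^2-1) := by
      rw [eq_div_iff hne]
      have h1 := hode τ hτ
      have h2 := SS_ode p ℓ h τ
      have h3 := TT_ode p ℓ h τ
      simp only [hwdef, hwdef', lam]
      linear_combination (-1:ℝ) * h1 + c * h2 + d * h3
    rw [← hval]
    exact hd
  have hzero := ode_unique_zero p ℓ hp w w' hw hw'
    (by simpa using hic0) (by simpa using hic1)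
  refine ⟨(c, d), ?_, ?_⟩
  · intro τ hτ
    have := hzero τ hτ
    simp only [hwdef] at this
    linarith [this]
  · intro y hy
    have hdiff : ∀ τ ∈ Set.Ioo (-1:ℝ) 1, (y.1 - c) * SS p ℓ τ + (y.2 - d) * TT p ℓ τ = 0 := by
      intro τ hτ
      have h1 := hy τ hτ
      have h2 := hzero τ hτ
      simp only [hwdef] at h2
      ring_nf
      ring_nf at h1 h2
      linarith
    have := indep p ℓ h (y.1 - c) (y.2 - d) hdiff
    have hy1 : y.1 = c := by linarith [this.1]
    have hy2 : y.2 = d := by linarith [this.2]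
    exact Prod.ext hy1 hy2
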